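/- Let P be the uniform probability distribution on the discrete hypercube {−1, 1}^d, and for each subset S ⊆ {1, …, d} let χ_S : {−1, 1}^d → ℝ be the parity function χ_S(x) = ∏_{j ∈ S} x_j. Let W be a finite-dimensional subspace of L²(P) such that (1/2^d) · Σ_{S ⊆ {1,…,d}} inf_{g ∈ W} ‖g − χ_S‖²_{L²(P)} ≤ ε. Then dim(W) ≥ (1 − ε) · 2^d. -/

import Mathlib

open Finset MeasureTheory

/-- The sign group `ℤˣ = {1, -1}` models the two-point set `{-1, 1}`. -/
noncomputable instance : MeasurableSpace ℤˣ := ⊤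


lemma sum_units_eq (g : ℤˣ → ℝ) : ∑ s : ℤˣ, g s = g 1 + g (-1) := by
  have h : (Finset.univ : Finset ℤˣ) = {1, -1} := by decide
  rw [h]; simp [Finset.sum_insert]

lemma parity_sum (d : ℕ) (S T : Finset (Fin d)) :
    ∑ x : Fin d → ℤˣ, (∏ j ∈ S, ((x j : ℤ):ℝ)) * ∏ j ∈ T, ((x j : ℤ):ℝ)
      = if S = T then (2^d : ℝ) else 0 := by
  classical
  have key : ∀ x : Fin d → ℤˣ,
      (∏ j ∈ S, ((x j : ℤ):ℝ)) * ∏ j ∈ T, ((x j : ℤ):ℝ)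
        = ∏ j : Fin d, ((if j ∈ S then ((x j : ℤ):ℝ) else 1) *
            (if j ∈ T then ((x j : ℤ):ℝ) else 1)) := by
    intro x
    rw [Finset.prod_mul_distrib, Fintype.prod_extend_by_one S, Fintype.prod_extend_by_one T]
  simp_rw [key]
  rw [← Fintype.prod_sum (κ := fun _ : Fin d => ℤˣ) (fun j s => (if j ∈ S then ((s : ℤ):ℝ) else 1) *
      (if j ∈ T then ((s : ℤ):ℝ) else 1))]
  have inner : ∀ j : Fin d,
      (∑ s : ℤˣ, (if j ∈ S then ((s : ℤ):ℝ) else 1) * (if j ∈ T then ((s : ℤ):ℝ) else 1))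
        = if ((j ∈ S) = (j ∈ T)) then 2 else 0 := by
    intro j
    rw [sum_units_eq]
    by_cases hS : j ∈ S <;> by_cases hT : j ∈ T <;> simp [hS, hT] <;> norm_num
  simp_rw [inner]
  by_cases h : S = T
  · subst h; simp
  · rw [if_neg h]
    have : ∃ j, ¬((j ∈ S) = (j ∈ T)) := by
      by_contra hc
      push_neg at hc
      exact h (Finset.ext fun j => by rw [hc j])
    obtain ⟨j, hj⟩ := this
    exact Finset.prod_eq_zero (mem_univ j) (if_neg hj)

/-- **Lower bound for linear methods approximating parity functions.**
Let `P` be the uniform probability distribution on the hypercube `{-1,1}^d`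
(modeled as `Fin d → ℤˣ`), and for `S ⊆ {1,…,d}` let `χ S ∈ L²(P)` be the
parity function `x ↦ ∏_{j ∈ S} x j`.  If `W` is a finite-dimensional subspace
of `L²(P)` with `(1/2^d) ∑_S inf_{g ∈ W} ‖g - χ S‖² ≤ ε`, then
`dim W ≥ (1 - ε) 2^d`. -/
theorem parity_dimension_lower_bound
    (d : ℕ) (P : Measure (Fin d → ℤˣ))
    (hP : P = (PMF.uniformOfFintype (Fin d → ℤˣ)).toMeasure)
    (χ : Finset (Fin d) → Lp ℝ 2 P)
    (hχ : ∀ S : Finset (Fin d),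
      (χ S : (Fin d → ℤˣ) → ℝ) =ᵐ[P] fun x => ∏ j ∈ S, ((x j : ℤ) : ℝ))
    (W : Submodule ℝ (Lp ℝ 2 P)) [FiniteDimensional ℝ W]
    (ε : ℝ)
    (hε : (1 / (2 ^ d : ℝ)) *
        ∑ S : Finset (Fin d), ⨅ g : W, ‖(g : Lp ℝ 2 P) - χ S‖ ^ 2 ≤ ε) :
    (Module.finrank ℝ W : ℝ) ≥ (1 - ε) * 2 ^ d := by
  classical
  have hcard : (Fintype.card (Fin d → ℤˣ)) = 2 ^ d := by
    rw [Fintype.card_fun]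
    norm_num
  -- inner products of χ
  have hinner : ∀ S T : Finset (Fin d),
      (inner ℝ (χ S) (χ T) : ℝ) = if S = T then 1 else 0 := by
    intro S T
    rw [MeasureTheory.L2.inner_def]
    have : ∫ a, (inner ℝ ((χ S : (Fin d → ℤˣ) → ℝ) a) ((χ T : (Fin d → ℤˣ) → ℝ) a) : ℝ) ∂P
        = ∫ a : Fin d → ℤˣ, (∏ j ∈ S, ((a j : ℤ):ℝ)) * ∏ j ∈ T, ((a j : ℤ):ℝ) ∂P := by
      apply integral_congr_ae
      filter_upwards [hχ S, hχ T] with a hS hT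
      simp [hS, hT, mul_comm]
    rw [this, hP, PMF.integral_eq_sum]
    simp_rw [PMF.uniformOfFintype_apply, smul_eq_mul]
    rw [← Finset.mul_sum, parity_sum]
    rw [hcard]
    by_cases h : S = T <;> simp [h]
  have hortho : Orthonormal ℝ χ := by
    rw [orthonormal_iff_ite]
    exact hinner
  haveI : CompleteSpace W := FiniteDimensional.complete ℝ W
  set q : Finset (Fin d) → Lp ℝ 2 P := fun S => ((W.orthogonalProjectionOnto (χ S) : W) : Lp ℝ 2 P)
    with hq_def
  have hq_mem : ∀ S, q S ∈ W := fun S => (W.orthogonalProjectionOnto (χ S)).2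
  have hnorm1 : ∀ S, ‖χ S‖ = 1 := hortho.1
  have hpyth : ∀ S, (1:ℝ) = ‖χ S - q S‖^2 + ‖q S‖^2 := by
    intro S
    have hmem : χ S - q S ∈ Wᗮ := Submodule.sub_starProjection_mem_orthogonal (χ S)
    have h' : (inner ℝ (χ S - q S) (q S) : ℝ) = 0 := by
      have := (Submodule.mem_orthogonal W (χ S - q S)).1 hmem (q S) (hq_mem S)
      rwa [real_inner_comm] at this
    have := norm_add_sq_eq_norm_sq_add_norm_sq_real h'
    rw [sub_add_cancel] at this
    rw [sq, sq, ← this, hnorm1 S, one_mul]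
  have hlb : ∀ S, (1:ℝ) - ‖q S‖^2 ≤ ⨅ g : W, ‖(g : Lp ℝ 2 P) - χ S‖ ^ 2 := by
    intro S
    apply le_ciInf
    intro g
    have hmem : q S - χ S ∈ Wᗮ := by
      have : χ S - q S ∈ Wᗮ := Submodule.sub_starProjection_mem_orthogonal (K := W) (χ S)
      simpa using Wᗮ.neg_mem this
    have h1 : (inner ℝ ((g : Lp ℝ 2 P) - q S) (q S - χ S) : ℝ) = 0 :=
      (Submodule.mem_orthogonal W _).1 hmem _ (W.sub_mem g.2 (hq_mem S))
    calc (1:ℝ) - ‖q S‖^2 = ‖χ S - q S‖^2 := by have := hpyth S; linarith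
    _ = ‖q S - χ S‖^2 := by rw [norm_sub_rev]
    _ ≤ ‖(g : Lp ℝ 2 P) - q S‖^2 + ‖q S - χ S‖^2 := le_add_of_nonneg_left (by positivity)
    _ = ‖((g : Lp ℝ 2 P) - q S) + (q S - χ S)‖^2 := by
        have := norm_add_sq_eq_norm_sq_add_norm_sq_real h1
        simp only [sq]; linarith
    _ = ‖(g : Lp ℝ 2 P) - χ S‖^2 := by rw [sub_add_sub_cancel]
  -- from hε: sum of ‖q S‖² is large
  have hcard2 : (Fintype.card (Finset (Fin d)) : ℝ) = 2 ^ d := by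
    rw [Fintype.card_finset, Fintype.card_fin]; norm_num
  have hsum1 : (1 - ε) * 2 ^ d ≤ ∑ S : Finset (Fin d), ‖q S‖^2 := by
    have h2 : ∑ S : Finset (Fin d), ((1:ℝ) - ‖q S‖^2)
        ≤ ∑ S : Finset (Fin d), ⨅ g : W, ‖(g : Lp ℝ 2 P) - χ S‖ ^ 2 :=
      Finset.sum_le_sum fun S _ => hlb S
    rw [Finset.sum_sub_distrib, Finset.sum_const, Finset.card_univ, nsmul_eq_mul, mul_one] at h2
    have h3 : ∑ S : Finset (Fin d), ⨅ g : W, ‖(g : Lp ℝ 2 P) - χ S‖ ^ 2 ≤ ε * 2 ^ d := by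
      have hpos : (0:ℝ) < 2 ^ d := by positivity
      rw [div_mul_eq_mul_div, one_mul, div_le_iff₀ hpos] at hε
      linarith [hε]
    rw [hcard2] at h2
    nlinarith
  -- Bessel: sum of ‖q S‖² is at most finrank
  let b := stdOrthonormalBasis ℝ W
  have hbL : Orthonormal ℝ (fun i => ((b i : W) : Lp ℝ 2 P)) := by
    rw [orthonormal_iff_ite]
    intro i j
    rw [← Submodule.coe_inner]
    exact orthonormal_iff_ite.1 b.orthonormal i j
  have hrepr : ∀ S, ‖q S‖^2
      = ∑ i, (inner ℝ ((b i : W) : Lp ℝ 2 P) (χ S) : ℝ)^2 := by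
    intro S
    have hnq : ‖q S‖ = ‖W.orthogonalProjectionOnto (χ S)‖ := rfl
    have hn2 : ‖W.orthogonalProjectionOnto (χ S)‖ = ‖b.repr (W.orthogonalProjectionOnto (χ S))‖ :=
      (b.repr.norm_map _).symm
    rw [hnq, hn2, EuclideanSpace.norm_eq, Real.sq_sqrt (by positivity)]
    refine Finset.sum_congr rfl fun i _ => ?_
    rw [Real.norm_eq_abs, sq_abs]
    congr 1
    rw [b.repr_apply_apply, Submodule.inner_orthogonalProjectionOnto_eq_of_mem_left]
  have hbessel : ∑ S : Finset (Fin d), ‖q S‖^2 ≤ (Module.finrank ℝ W : ℝ) := by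
    calc ∑ S : Finset (Fin d), ‖q S‖^2
        = ∑ S : Finset (Fin d), ∑ i, (inner ℝ ((b i : W) : Lp ℝ 2 P) (χ S) : ℝ)^2 :=
          Finset.sum_congr rfl fun S _ => hrepr S
    _ = ∑ i, ∑ S : Finset (Fin d), (inner ℝ ((b i : W) : Lp ℝ 2 P) (χ S) : ℝ)^2 :=
          Finset.sum_comm
    _ ≤ ∑ i : Fin (Module.finrank ℝ W), (1:ℝ) := by
          refine Finset.sum_le_sum fun i _ => ?_
          have hb := hortho.sum_inner_products_le (s := Finset.univ)
            (((b i : W) : Lp ℝ 2 P))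
          have hbn : ‖((b i : W) : Lp ℝ 2 P)‖ = 1 := hbL.1 i
          rw [hbn, one_pow] at hb
          refine le_trans (le_of_eq ?_) hb
          refine Finset.sum_congr rfl fun S _ => ?_
          rw [Real.norm_eq_abs, sq_abs, real_inner_comm]
    _ = (Module.finrank ℝ W : ℝ) := by simp
  linarith
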